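/- Let M ∈ ℝ^{N×N}, B ∈ ℝ^{N×m}, and let F = [F_1^⊤, F_2^⊤] be orthogonal with 𝒱 = im(F_1^⊤) an M-invariant subspace containing every column of B. If the pair (M, B) is stabilizable and F_2 M F_2^⊤ is Hurwitz stable, then the projected pair (F_1 M F_1^⊤, F_1 B) is stabilizable. -/

import Mathlib

open Matrix

/-- Complexification of a real matrix. -/
noncomputable def cplx {a b : Type*} (M : Matrix a b ℝ) : Matrix a b ℂ :=
  M.map (fun x => (x : ℂ))

/-- Hautus test: `(M, B)` is stabilizable iff for every `λ ∈ ℂ` with `Re λ ≥ 0`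
the matrix `[λI - M, B]` has full row rank. -/
def Stabilizable {N m : ℕ} (M : Matrix (Fin N) (Fin N) ℝ)
    (B : Matrix (Fin N) (Fin m) ℝ) : Prop :=
  ∀ lam : ℂ, 0 ≤ lam.re →
    (Matrix.fromCols (lam • (1 : Matrix (Fin N) (Fin N) ℂ) - cplx M) (cplx B)).rank = N

/-- Hurwitz stability: every (complex) eigenvalue, i.e. every complex root of the
characteristic polynomial, has negative real part. -/
def Hurwitz {s : ℕ} (M : Matrix (Fin s) (Fin s) ℝ) : Prop :=
  ∀ z : ℂ, ((M.charpoly).map (algebraMap ℝ ℂ)).IsRoot z → z.re < 0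

/- ### Auxiliary lemmas -/

lemma cplx_mul {a b c : Type*} [Fintype b] (A : Matrix a b ℝ) (B : Matrix b c ℝ) :
    cplx (A * B) = cplx A * cplx B := by
  show (A * B).map (Complex.ofRealHom : ℝ →+* ℂ) = _
  rw [Matrix.map_mul]; rfl

lemma cplx_transpose {a b : Type*} (A : Matrix a b ℝ) : cplx Aᵀ = (cplx A)ᵀ := rfl

lemma cplx_add {a b : Type*} (A B : Matrix a b ℝ) : cplx (A + B) = cplx A + cplx B := by
  ext i j; simp [cplx]

lemma cplx_one {a : Type*} [Fintype a] [DecidableEq a] : cplx (1 : Matrix a a ℝ) = 1 := by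
  ext i j; simp [cplx, Matrix.one_apply]; split <;> simp

lemma cplx_zero {a b : Type*} : cplx (0 : Matrix a b ℝ) = 0 := by
  ext i j; simp [cplx]

lemma cplx_charpoly {s : ℕ} (A : Matrix (Fin s) (Fin s) ℝ) :
    (cplx A).charpoly = A.charpoly.map (algebraMap ℝ ℂ) := by
  rw [← Matrix.charpoly_map]; rfl

lemma eval_charpoly_complex {s : ℕ} (A : Matrix (Fin s) (Fin s) ℂ) (z : ℂ) :
    A.charpoly.eval z = (z • (1 : Matrix (Fin s) (Fin s) ℂ) - A).det := by
  rw [Matrix.charpoly, eval_det, Matrix.matPolyEquiv_charmatrix,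
    Polynomial.eval_sub, Polynomial.eval_X, Polynomial.eval_C, Matrix.smul_one_eq_diagonal]
  rfl

lemma vecMul_smul_one {n : ℕ} (v : Fin n → ℂ) (z : ℂ) :
    v ᵥ* (z • (1 : Matrix (Fin n) (Fin n) ℂ)) = z • v := by
  ext j; simp [Matrix.vecMul, dotProduct, Matrix.smul_apply, Matrix.one_apply, mul_comm]

lemma rank_eq_card_rows_iff {n : ℕ} {p : Type*} [Fintype p] (A : Matrix (Fin n) p ℂ) :
    A.rank = n ↔ ∀ v : Fin n → ℂ, v ᵥ* A = 0 → v = 0 := by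
  rw [← Matrix.rank_transpose]
  have hrn := LinearMap.finrank_range_add_finrank_ker (Aᵀ.mulVecLin)
  have hfin : Module.finrank ℂ (Fin n → ℂ) = n := by simp
  rw [hfin] at hrn
  rw [Matrix.rank]
  constructor
  · intro h v hv
    have hker : LinearMap.ker Aᵀ.mulVecLin = ⊥ := by
      have : Module.finrank ℂ (LinearMap.ker Aᵀ.mulVecLin) = 0 := by omega
      exact Submodule.finrank_eq_zero.mp this
    have hv' : Aᵀ.mulVecLin v = 0 := by
      simp [Matrix.mulVecLin_apply, Matrix.mulVec_transpose, hv]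
    exact LinearMap.ker_eq_bot'.mp hker v hv'
  · intro h
    have hker : LinearMap.ker Aᵀ.mulVecLin = ⊥ := by
      rw [LinearMap.ker_eq_bot']
      intro v hv
      exact h v (by simpa [Matrix.mulVecLin_apply, Matrix.mulVec_transpose] using hv)
    rw [hker] at hrn
    simpa using hrn

/-- If `𝒱 = im(F₁ᵀ)` is `M`-invariant and contains every column of `B`, with `F = [F₁ᵀ, F₂ᵀ]`
orthogonal, `(M, B)` stabilizable and `F₂MF₂ᵀ` Hurwitz, then the projected pair
`(F₁MF₁ᵀ, F₁B)` is stabilizable. -/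
theorem projected_pair_stabilizable (N r s m : ℕ)
    (M : Matrix (Fin N) (Fin N) ℝ) (B : Matrix (Fin N) (Fin m) ℝ)
    (F1 : Matrix (Fin r) (Fin N) ℝ) (F2 : Matrix (Fin s) (Fin N) ℝ)
    (h11 : F1 * F1ᵀ = 1) (h22 : F2 * F2ᵀ = 1) (h21 : F2 * F1ᵀ = 0)
    (hcomplete : F1ᵀ * F1 + F2ᵀ * F2 = 1)
    (hinv : ∀ v ∈ LinearMap.range (F1ᵀ).mulVecLin,
      M *ᵥ v ∈ LinearMap.range (F1ᵀ).mulVecLin)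
    (hBcols : ∀ j : Fin m, (fun i => B i j) ∈ LinearMap.range (F1ᵀ).mulVecLin)
    (hstab : Stabilizable M B)
    (hHur : Hurwitz (F2 * M * F2ᵀ)) :
    Stabilizable (F1 * M * F1ᵀ) (F1 * B) := by
  -- Real consequences of invariance: F₂MF₁ᵀ = 0 and F₂B = 0
  have hMF : F2 * (M * F1ᵀ) = 0 := by
    ext i j
    obtain ⟨y, hy⟩ := hinv _ ⟨Pi.single j 1, rfl⟩
    have h2 : F1ᵀ *ᵥ Pi.single j 1 = fun k => F1ᵀ k j := by
      ext k; simp [Matrix.mulVec_single]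
    have h3 : (fun k => (M * F1ᵀ) k j) = F1ᵀ *ᵥ y := by
      rw [show F1ᵀ *ᵥ y = M *ᵥ (F1ᵀ *ᵥ Pi.single j 1) from hy, h2]
      ext i'; simp [Matrix.mul_apply, Matrix.mulVec, dotProduct]
    have h4 : (fun i => (F2 * (M * F1ᵀ)) i j) = F2 *ᵥ (F1ᵀ *ᵥ y) := by
      rw [← h3]; ext i'; simp [Matrix.mul_apply, Matrix.mulVec, dotProduct]
    have h5 : F2 *ᵥ (F1ᵀ *ᵥ y) = 0 := by
      rw [Matrix.mulVec_mulVec, h21, Matrix.zero_mulVec]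
    have h6 := congrFun h4 i
    rw [h5] at h6
    simpa using h6
  have hFB : F2 * B = 0 := by
    ext i j
    obtain ⟨y, hy⟩ := hBcols j
    have h4 : (fun i => (F2 * B) i j) = F2 *ᵥ (F1ᵀ *ᵥ y) := by
      rw [show F1ᵀ *ᵥ y = fun i => B i j from hy]
      ext i'; simp [Matrix.mul_apply, Matrix.mulVec, dotProduct]
    have h5 : F2 *ᵥ (F1ᵀ *ᵥ y) = 0 := by
      rw [Matrix.mulVec_mulVec, h21, Matrix.zero_mulVec]
    have h6 := congrFun h4 i
    rw [h5] at h6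
    simpa using h6
  -- Complexified identities
  have c11 : cplx F1 * (cplx F1)ᵀ = 1 := by
    rw [← cplx_transpose, ← cplx_mul, h11, cplx_one]
  have c21 : cplx F2 * (cplx F1)ᵀ = 0 := by
    rw [← cplx_transpose, ← cplx_mul, h21, cplx_zero]
  have ccomp : (cplx F1)ᵀ * cplx F1 + (cplx F2)ᵀ * cplx F2 = 1 := by
    rw [← cplx_transpose, ← cplx_transpose, ← cplx_mul, ← cplx_mul, ← cplx_add, hcomplete,
      cplx_one]
  have cMF : cplx F2 * cplx M * (cplx F1)ᵀ = 0 := by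
    rw [← cplx_transpose, Matrix.mul_assoc, ← cplx_mul, ← cplx_mul, hMF, cplx_zero]
  have cFB : cplx F2 * cplx B = 0 := by
    rw [← cplx_mul, hFB, cplx_zero]
  have e11 : cplx (F1 * M * F1ᵀ) = cplx F1 * cplx M * (cplx F1)ᵀ := by
    rw [cplx_mul, cplx_mul, cplx_transpose]
  have e22 : cplx (F2 * M * F2ᵀ) = cplx F2 * cplx M * (cplx F2)ᵀ := by
    rw [cplx_mul, cplx_mul, cplx_transpose]
  -- block decompositions of F₁M and F₂M
  have idA : cplx F1 * cplx M =
      cplx (F1 * M * F1ᵀ) * cplx F1 + (cplx F1 * cplx M * (cplx F2)ᵀ) * cplx F2 := by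
    rw [e11]
    calc cplx F1 * cplx M
        = cplx F1 * cplx M * ((cplx F1)ᵀ * cplx F1 + (cplx F2)ᵀ * cplx F2) := by
          rw [ccomp, Matrix.mul_one]
      _ = _ := by simp only [Matrix.mul_add, Matrix.mul_assoc]
  have idB : cplx F2 * cplx M = cplx (F2 * M * F2ᵀ) * cplx F2 := by
    rw [e22]
    calc cplx F2 * cplx M
        = cplx F2 * cplx M * ((cplx F1)ᵀ * cplx F1 + (cplx F2)ᵀ * cplx F2) := by
          rw [ccomp, Matrix.mul_one]
      _ = (cplx F2 * cplx M * (cplx F1)ᵀ) * cplx F1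
          + (cplx F2 * cplx M * (cplx F2)ᵀ) * cplx F2 := by
          simp only [Matrix.mul_add, Matrix.mul_assoc]
      _ = _ := by rw [cMF, Matrix.zero_mul, zero_add]
  -- main argument
  intro lam hlam
  rw [rank_eq_card_rows_iff]
  intro w hw
  rw [Matrix.vecMul_fromCols] at hw
  have hw1 : w ᵥ* (lam • (1 : Matrix (Fin r) (Fin r) ℂ) - cplx (F1 * M * F1ᵀ)) = 0 := by
    ext j; exact congrFun hw (Sum.inl j)
  have hw2 : w ᵥ* cplx (F1 * B) = 0 := by
    ext j; exact congrFun hw (Sum.inr j)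
  have hA : w ᵥ* cplx (F1 * M * F1ᵀ) = lam • w := by
    rw [Matrix.vecMul_sub, sub_eq_zero] at hw1
    rw [← hw1, vecMul_smul_one]
  -- invertibility of D = λI - F₂MF₂ᵀ (complexified)
  have hdet : (lam • (1 : Matrix (Fin s) (Fin s) ℂ) - cplx (F2 * M * F2ᵀ)).det ≠ 0 := by
    intro h
    have hroot : ((F2 * M * F2ᵀ).charpoly.map (algebraMap ℝ ℂ)).IsRoot lam := by
      rw [← cplx_charpoly, Polynomial.IsRoot, eval_charpoly_complex]
      exact h
    exact absurd hlam (not_le.mpr (hHur lam hroot))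
  obtain ⟨u, huD⟩ : ∃ u : Fin s → ℂ,
      u ᵥ* (lam • (1 : Matrix (Fin s) (Fin s) ℂ) - cplx (F2 * M * F2ᵀ))
        = w ᵥ* (cplx F1 * cplx M * (cplx F2)ᵀ) :=
    ⟨(w ᵥ* (cplx F1 * cplx M * (cplx F2)ᵀ)) ᵥ* (lam • 1 - cplx (F2 * M * F2ᵀ))⁻¹, by
      rw [Matrix.vecMul_vecMul, Matrix.nonsing_inv_mul _ (Ne.isUnit hdet), Matrix.vecMul_one]⟩
  have hB : lam • u = w ᵥ* (cplx F1 * cplx M * (cplx F2)ᵀ) + u ᵥ* cplx (F2 * M * F2ᵀ) := by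
    rw [← huD, Matrix.vecMul_sub, vecMul_smul_one, sub_add_cancel]
  have hz1 : (w ᵥ* cplx F1 + u ᵥ* cplx F2) ᵥ*
      (lam • (1 : Matrix (Fin N) (Fin N) ℂ) - cplx M) = 0 := by
    have t1 : (w ᵥ* cplx F1 + u ᵥ* cplx F2) ᵥ* (lam • (1 : Matrix (Fin N) (Fin N) ℂ))
        = (lam • w) ᵥ* cplx F1 + (lam • u) ᵥ* cplx F2 := by
      rw [vecMul_smul_one, smul_add, Matrix.smul_vecMul, Matrix.smul_vecMul]
    have t2 : (w ᵥ* cplx F1 + u ᵥ* cplx F2) ᵥ* cplx M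
        = (w ᵥ* cplx (F1 * M * F1ᵀ)) ᵥ* cplx F1 +
          (w ᵥ* (cplx F1 * cplx M * (cplx F2)ᵀ)) ᵥ* cplx F2 +
          (u ᵥ* cplx (F2 * M * F2ᵀ)) ᵥ* cplx F2 := by
      conv_lhs => rw [Matrix.add_vecMul, Matrix.vecMul_vecMul, Matrix.vecMul_vecMul, idA, idB,
        Matrix.vecMul_add,
        ← Matrix.vecMul_vecMul w (cplx (F1 * M * F1ᵀ)) (cplx F1),
        ← Matrix.vecMul_vecMul w (cplx F1 * cplx M * (cplx F2)ᵀ) (cplx F2),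
        ← Matrix.vecMul_vecMul u (cplx (F2 * M * F2ᵀ)) (cplx F2)]
    rw [Matrix.vecMul_sub, t1, t2, hA, hB, Matrix.add_vecMul]
    abel
  have hz2 : (w ᵥ* cplx F1 + u ᵥ* cplx F2) ᵥ* cplx B = 0 := by
    rw [Matrix.add_vecMul, Matrix.vecMul_vecMul, Matrix.vecMul_vecMul, ← cplx_mul, hw2,
      cFB, Matrix.vecMul_zero, add_zero]
  have hz0 : (w ᵥ* cplx F1 + u ᵥ* cplx F2) = 0 := by
    have hbig := (rank_eq_card_rows_iff _).mp (hstab lam hlam)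
    refine hbig _ ?_
    rw [Matrix.vecMul_fromCols, hz1, hz2]
    ext (_ | _) <;> rfl
  have hwz : (w ᵥ* cplx F1 + u ᵥ* cplx F2) ᵥ* (cplx F1)ᵀ = w := by
    rw [Matrix.add_vecMul, Matrix.vecMul_vecMul, Matrix.vecMul_vecMul, c11, c21,
      Matrix.vecMul_one, Matrix.vecMul_zero, add_zero]
  rw [hz0, Matrix.zero_vecMul] at hwz
  exact hwz.symm
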